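/- Let p : 2^V → ℤ be a symmetric skew-supermodular function and Z ⊆ V. Then the contracted function p/Z : 2^{V − Z} → ℤ defined by (p/Z)(X) = max{p(X ∪ R) : R ⊆ Z} is symmetric and skew-supermodular on the ground set V − Z. -/
import Mathlib


/-- Skew-supermodularity. -/
def SkewSupermodular {V : Type*} [DecidableEq V] (p : Finset V → ℤ) : Prop :=
  ∀ X Y : Finset V, p X + p Y ≤ p (X ∩ Y) + p (X ∪ Y) ∨
    p X + p Y ≤ p (X \ Y) + p (Y \ X)

/-- The contraction `p/Z` of a set function: `(p/Z)(X) = max {p(X ∪ R) : R ⊆ Z}`. -/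
def contractFn {V : Type*} [DecidableEq V] (p : Finset V → ℤ) (Z : Finset V)
    (X : Finset V) : ℤ :=
  Z.powerset.sup' ⟨∅, Finset.empty_mem_powerset Z⟩ (fun R => p (X ∪ R))

lemma le_contractFn {V : Type*} [DecidableEq V] (p : Finset V → ℤ) {Z R : Finset V}
    (X : Finset V) (hR : R ⊆ Z) : p (X ∪ R) ≤ contractFn p Z X :=
  Finset.le_sup' (f := fun R => p (X ∪ R)) (Finset.mem_powerset.2 hR)

lemma contractFn_exists {V : Type*} [DecidableEq V] (p : Finset V → ℤ) (Z X : Finset V) :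
    ∃ R ⊆ Z, contractFn p Z X = p (X ∪ R) := by
  obtain ⟨R, hR, h⟩ := Finset.exists_mem_eq_sup' (α := ℤ)
    (⟨∅, Finset.empty_mem_powerset Z⟩ : Z.powerset.Nonempty) (fun R => p (X ∪ R))
  exact ⟨R, Finset.mem_powerset.1 hR, h⟩

lemma contract_le_aux {V : Type*} [Fintype V] [DecidableEq V]
    (p : Finset V → ℤ) (Z : Finset V) (hsym : ∀ X : Finset V, p X = p Xᶜ)
    {X : Finset V} (hX : X ⊆ Zᶜ) :
    contractFn p Z X ≤ contractFn p Z (Zᶜ \ X) := by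
  apply Finset.sup'_le
  intro R hR
  rw [Finset.mem_powerset] at hR
  have key : (X ∪ R)ᶜ = (Zᶜ \ X) ∪ (Z \ R) := by
    ext a
    have h1 : a ∈ X → a ∉ Z := fun h => Finset.mem_compl.1 (hX h)
    have h2 : a ∈ R → a ∈ Z := fun h => hR h
    simp only [Finset.mem_compl, Finset.mem_union, Finset.mem_sdiff]
    by_cases hz : a ∈ Z <;> tauto
  calc p (X ∪ R) = p ((Zᶜ \ X) ∪ (Z \ R)) := by rw [hsym, key]
    _ ≤ _ := le_contractFn p _ (Finset.sdiff_subset)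

theorem contract_symmetric_skewSupermodular {V : Type*} [Fintype V] [DecidableEq V]
    (p : Finset V → ℤ) (Z : Finset V)
    (hsym : ∀ X : Finset V, p X = p Xᶜ)
    (hskew : SkewSupermodular p) :
    (∀ X : Finset V, X ⊆ Zᶜ → contractFn p Z X = contractFn p Z (Zᶜ \ X)) ∧
      (∀ X Y : Finset V, X ⊆ Zᶜ → Y ⊆ Zᶜ →
        (contractFn p Z X + contractFn p Z Y ≤
            contractFn p Z (X ∩ Y) + contractFn p Z (X ∪ Y) ∨
          contractFn p Z X + contractFn p Z Y ≤
            contractFn p Z (X \ Y) + contractFn p Z (Y \ X))) := by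
  constructor
  · intro X hX
    apply le_antisymm (contract_le_aux p Z hsym hX)
    have h := contract_le_aux p Z hsym (Finset.sdiff_subset (s := Zᶜ) (t := X))
    rwa [Finset.sdiff_sdiff_eq_self hX] at h
  · intro X Y hX hY
    obtain ⟨R, hR, hRe⟩ := contractFn_exists p Z X
    obtain ⟨S, hS, hSe⟩ := contractFn_exists p Z Y
    have hXZ : ∀ a, a ∈ X → a ∉ Z := fun a h => Finset.mem_compl.1 (hX h)
    have hYZ : ∀ a, a ∈ Y → a ∉ Z := fun a h => Finset.mem_compl.1 (hY h)
    rcases hskew (X ∪ R) (Y ∪ S) with h | h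
    · left
      have e1 : (X ∪ R) ∩ (Y ∪ S) = (X ∩ Y) ∪ (R ∩ S) := by
        ext a
        have := hXZ a; have := hYZ a
        have : a ∈ R → a ∈ Z := fun h => hR h
        have : a ∈ S → a ∈ Z := fun h => hS h
        simp only [Finset.mem_inter, Finset.mem_union]
        tauto
      have e2 : (X ∪ R) ∪ (Y ∪ S) = (X ∪ Y) ∪ (R ∪ S) := by
        ext a; simp only [Finset.mem_union]; tauto
      rw [e1, e2] at h
      calc contractFn p Z X + contractFn p Z Y = p (X ∪ R) + p (Y ∪ S) := by
            rw [hRe, hSe]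
        _ ≤ p ((X ∩ Y) ∪ (R ∩ S)) + p ((X ∪ Y) ∪ (R ∪ S)) := h
        _ ≤ _ := add_le_add (le_contractFn p _ (Finset.inter_subset_left.trans hR))
            (le_contractFn p _ (Finset.union_subset hR hS))
    · right
      have e1 : (X ∪ R) \ (Y ∪ S) = (X \ Y) ∪ (R \ S) := by
        ext a
        have := hXZ a; have := hYZ a
        have : a ∈ R → a ∈ Z := fun h => hR h
        have : a ∈ S → a ∈ Z := fun h => hS h
        simp only [Finset.mem_sdiff, Finset.mem_union, not_or]
        tauto
      have e2 : (Y ∪ S) \ (X ∪ R) = (Y \ X) ∪ (S \ R) := by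
        ext a
        have := hXZ a; have := hYZ a
        have : a ∈ R → a ∈ Z := fun h => hR h
        have : a ∈ S → a ∈ Z := fun h => hS h
        simp only [Finset.mem_sdiff, Finset.mem_union, not_or]
        tauto
      rw [e1, e2] at h
      calc contractFn p Z X + contractFn p Z Y = p (X ∪ R) + p (Y ∪ S) := by
            rw [hRe, hSe]
        _ ≤ p ((X \ Y) ∪ (R \ S)) + p ((Y \ X) ∪ (S \ R)) := h
        _ ≤ _ := add_le_add (le_contractFn p _ (Finset.sdiff_subset.trans hR))
            (le_contractFn p _ (Finset.sdiff_subset.trans hS))
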